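/- arXiv:1307.7119 — 4 statements merged into one kernel-verified Lean document; each statement's English description precedes it below -/
import Mathlib

section
/- Let A₀ be a unital C*-algebra, n a positive integer, and A = [a_ij] ∈ M_n(A₀). Let Â be the matricial norm of A, i.e. the n×n real matrix with (i,j) entry ‖a_ij‖. Then the spectral radius of A (as an element of the C*-algebra M_n(A₀)) is at most the spectral radius of the matrix Â: ρ(A) ≤ ρ(Â). -/
set_option synthInstance.maxHeartbeats 1000000
set_option maxHeartbeats 1000000

open Filter
open scoped ENNReal Topology

/-- For a matrix `A` over a unital C*-algebra `A₀`, the spectral radius of `A`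
as an element of the C*-algebra `Mₙ(A₀)` is at most the spectral radius of the matricial norm
`Â = (‖a_ij‖)_{ij}` (viewed as a complex matrix, so that its full spectrum is accounted for). -/
theorem matrix_spectralRadius_le_spectralRadius_of_matricial_norm
    {A₀ : Type*} [CStarAlgebra A₀] {n : ℕ} (hn : 0 < n)
    (A : Matrix (Fin n) (Fin n) A₀) :
    spectralRadius ℂ A ≤
      spectralRadius ℂ (Matrix.of fun i j => (‖A i j‖ : ℂ) : Matrix (Fin n) (Fin n) ℂ) := by
  classical
  haveI : Nonempty (Fin n) := ⟨⟨0, hn⟩⟩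
  letI : NormedRing (Matrix (Fin n) (Fin n) A₀) := Matrix.linftyOpNormedRing
  letI : NormedAlgebra ℂ (Matrix (Fin n) (Fin n) A₀) := Matrix.linftyOpNormedAlgebra
  letI : NormedRing (Matrix (Fin n) (Fin n) ℂ) := Matrix.linftyOpNormedRing
  letI : NormedAlgebra ℂ (Matrix (Fin n) (Fin n) ℂ) := Matrix.linftyOpNormedAlgebra
  haveI h1 : CompleteSpace (PiLp 1 fun _ : Fin n => A₀) :=
    inferInstance
  haveI h2 : CompleteSpace (PiLp 1 fun _ : Fin n => ℂ) :=
    inferInstance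
  haveI : @CompleteSpace (Matrix (Fin n) (Fin n) A₀)
      (PseudoMetricSpace.toUniformSpace (α := Matrix (Fin n) (Fin n) A₀)) :=
    inferInstanceAs (CompleteSpace (Fin n → Fin n → A₀))
  haveI : @CompleteSpace (Matrix (Fin n) (Fin n) ℂ)
      (PseudoMetricSpace.toUniformSpace (α := Matrix (Fin n) (Fin n) ℂ)) :=
    inferInstanceAs (CompleteSpace (Fin n → Fin n → ℂ))
  set B : Matrix (Fin n) (Fin n) ℝ := Matrix.of fun i j => ‖A i j‖ with hB
  set C : Matrix (Fin n) (Fin n) ℂ :=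
    (Matrix.of fun i j => (‖A i j‖ : ℂ) : Matrix (Fin n) (Fin n) ℂ) with hC
  have hCB : C = B.map Complex.ofReal := by
    ext i j; simp [hC, hB, Matrix.map_apply]
  have hCpow : ∀ m : ℕ, C ^ m = (B ^ m).map Complex.ofReal := by
    intro m
    rw [hCB]
    have : (Complex.ofRealHom.mapMatrix (B ^ m) : Matrix (Fin n) (Fin n) ℂ)
        = Complex.ofRealHom.mapMatrix B ^ m := map_pow _ B m
    exact this.symm
  -- entries of powers of B are nonnegative
  have hBpos : ∀ m : ℕ, ∀ i j, 0 ≤ (B ^ m) i j := by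
    intro m
    induction m with
    | zero => intro i j; simp [Matrix.one_apply]; positivity
    | succ m ih =>
      intro i j
      rw [pow_succ, Matrix.mul_apply]
      exact Finset.sum_nonneg fun k _ => mul_nonneg (ih i k) (show (0:ℝ) ≤ B k j from norm_nonneg (A k j))
  -- entrywise bound for powers of A (for exponents ≥ 1)
  have key : ∀ m : ℕ, ∀ i j, ‖(A ^ (m + 1)) i j‖ ≤ (B ^ (m + 1)) i j := by
    intro m
    induction m with
    | zero => intro i j; simp [hB]
    | succ m ih =>
      intro i j
      simp only [pow_succ, Matrix.mul_apply]
      refine (norm_sum_le _ _).trans (Finset.sum_le_sum fun k _ => ?_)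
      exact (norm_mul_le _ _).trans
        (mul_le_mul_of_nonneg_right (ih i k) (norm_nonneg _))
  -- norm comparison of powers
  have hnorm : ∀ m : ℕ, ‖A ^ (m + 1)‖₊ ≤ ‖C ^ (m + 1)‖₊ := by
    intro m
    rw [Matrix.linfty_opNNNorm_def, Matrix.linfty_opNNNorm_def]
    refine Finset.sup_mono_fun fun i _ => ?_
    refine Finset.sum_le_sum fun j _ => ?_
    rw [← NNReal.coe_le_coe]
    simp only [coe_nnnorm]
    calc ‖(A ^ (m + 1)) i j‖ ≤ (B ^ (m + 1)) i j := key m i j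
      _ ≤ ‖(C ^ (m + 1)) i j‖ := by
          rw [hCpow, Matrix.map_apply, Complex.norm_real]
          exact le_abs_self _
  -- Gelfand's formula on both sides
  have hA := spectrum.pow_nnnorm_pow_one_div_tendsto_nhds_spectralRadius A
  have hC' := spectrum.pow_nnnorm_pow_one_div_tendsto_nhds_spectralRadius C
  refine le_of_tendsto_of_tendsto hA hC' ?_
  filter_upwards [eventually_ge_atTop 1] with m hm
  obtain ⟨m, rfl⟩ := Nat.exists_eq_add_of_le hm
  rw [add_comm]
  exact ENNReal.rpow_le_rpow (by exact_mod_cast hnorm m)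
    (by positivity)
end

section
/- Let A₀ be a unital C*-algebra and let A ∈ M_n(A₀) be selfadjoint (Hermitian) with bandwidth m ≥ 1 and with spectrum contained in the real interval [−1,1]. Let f : ℝ → ℝ be continuous on [−1,1], and let f(A) ∈ M_n(A₀) be defined by the continuous functional calculus for selfadjoint elements. Then for every k ≥ 0, every real polynomial p of degree at most k, and every pair of indices i, j with |i − j| > k·m, one has ‖[f(A)]_{ij}‖ ≤ sup_{x ∈ [−1,1]} |f(x) − p(x)|. -/
open Matrix Polynomial

section Aux

lemma aux_norm_le_one_of_proj {B : Type*} [NonUnitalNormedRing B] [StarRing B] [CStarRing B]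
    (q : B) (h : star q * q = q) : ‖q‖ ≤ 1 := by
  have h2 : ‖q‖ * ‖q‖ = ‖q‖ := by rw [← CStarRing.norm_star_mul_self, h]
  nlinarith [norm_nonneg q]

variable {A₀ : Type*} [CStarAlgebra A₀] {n : ℕ} {𝒜 : Type*} [CStarAlgebra 𝒜]
  (φ : Matrix (Fin n) (Fin n) A₀ ≃⋆ₐ[ℂ] 𝒜)

/-- The diagonal embedding `a ↦ φ (stdBasisMatrix j j a)` as a non-unital star algebra hom. -/
noncomputable def auxDiagHom (j : Fin n) : A₀ →⋆ₙₐ[ℂ] 𝒜 where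
  toFun a := φ (Matrix.single j j a)
  map_smul' c a := by
    simp only [MonoidHom.id_apply, ← map_smul φ, Matrix.smul_single]
  map_zero' := by
    show φ _ = 0
    rw [Matrix.single_zero, map_zero]
  map_add' a b := by
    rw [← map_add φ, ← Matrix.single_add]
  map_mul' a b := by
    rw [← map_mul φ, Matrix.single_mul_single_same]
  map_star' a := by
    rw [← map_star φ]
    refine congrArg φ ?_
    ext i' j'
    simp [Matrix.single, Matrix.star_apply, Matrix.conjTranspose_apply,
      apply_ite star, and_comm]

lemma auxDiagHom_injective (j : Fin n) : Function.Injective (auxDiagHom φ j) := by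
  intro a b hab
  have h := φ.injective hab
  have := congrFun (congrFun h j) j
  simpa [Matrix.single_apply_same] using this

lemma aux_norm_std (i j : Fin n) (a : A₀) :
    ‖φ (Matrix.single i j a)‖ = ‖a‖ := by
  rw [← sq_eq_sq₀ (norm_nonneg _) (norm_nonneg _)]
  have hstar : star (Matrix.single i j a) = Matrix.single j i (star a) := by
    ext i' j'
    simp [Matrix.single, Matrix.star_apply, Matrix.conjTranspose_apply,
      apply_ite star, and_comm]
  calc ‖φ (Matrix.single i j a)‖ ^ 2
      = ‖star (φ (Matrix.single i j a)) * φ (Matrix.single i j a)‖ := by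
        rw [CStarRing.norm_star_mul_self]; ring
    _ = ‖(auxDiagHom φ j) (star a * a)‖ := by
        rw [← map_star φ, ← map_mul φ, hstar, Matrix.single_mul_single_same]
        rfl
    _ = ‖star a * a‖ := NonUnitalStarAlgHom.norm_map _ (auxDiagHom_injective φ j) _
    _ = ‖a‖ ^ 2 := by rw [CStarRing.norm_star_mul_self]; ring

lemma aux_entry_norm_le (M : Matrix (Fin n) (Fin n) A₀) (i j : Fin n) :
    ‖M i j‖ ≤ ‖φ M‖ := by
  have hdecomp : Matrix.single i j (M i j)
      = Matrix.single i i (1 : A₀) * M * Matrix.single j j (1 : A₀) := by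
    ext a' b'
    by_cases hb : b' = j
    · subst hb
      rw [Matrix.mul_single_apply_same]
      by_cases ha : a' = i
      · subst ha
        rw [Matrix.single_mul_apply_same]
        simp [Matrix.single_apply_same]
      · rw [Matrix.single_mul_apply_of_ne _ _ _ _ _ ha]
        simp [Matrix.single, Ne.symm ha, ha]
    · rw [Matrix.mul_single_apply_of_ne _ _ _ _ _ hb]
      simp [Matrix.single, Ne.symm hb, hb]
  have hstarE : ∀ l : Fin n, star (Matrix.single l l (1 : A₀))
      = Matrix.single l l (1 : A₀) := by
    intro l
    ext i' j'
    simp [Matrix.single, Matrix.star_apply, Matrix.conjTranspose_apply,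
      apply_ite star, and_comm]
  have hq1 : ‖φ (Matrix.single i i (1 : A₀))‖ ≤ 1 := by
    apply aux_norm_le_one_of_proj
    rw [← map_star φ, ← map_mul φ, hstarE, Matrix.single_mul_single_same, one_mul]
  have hq2 : ‖φ (Matrix.single j j (1 : A₀))‖ ≤ 1 := by
    apply aux_norm_le_one_of_proj
    rw [← map_star φ, ← map_mul φ, hstarE, Matrix.single_mul_single_same, one_mul]
  calc ‖M i j‖ = ‖φ (Matrix.single i j (M i j))‖ := (aux_norm_std φ i j _).symm
    _ = ‖φ (Matrix.single i i (1 : A₀)) * φ M * φ (Matrix.single j j (1 : A₀))‖ := by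
        rw [← map_mul φ, ← map_mul φ, ← hdecomp]
    _ ≤ ‖φ (Matrix.single i i (1 : A₀)) * φ M‖ * ‖φ (Matrix.single j j (1 : A₀))‖ :=
        norm_mul_le _ _
    _ ≤ ‖φ (Matrix.single i i (1 : A₀))‖ * ‖φ M‖ * ‖φ (Matrix.single j j (1 : A₀))‖ := by
        gcongr; exact norm_mul_le _ _
    _ ≤ 1 * ‖φ M‖ * 1 := by
        have := norm_nonneg (φ M); gcongr
    _ = ‖φ M‖ := by ring

lemma aux_pow_band (A : Matrix (Fin n) (Fin n) A₀) (m : ℕ)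
    (hband : ∀ i j : Fin n, (m : ℤ) < |(i : ℤ) - (j : ℤ)| → A i j = 0) :
    ∀ (d : ℕ) (i j : Fin n), ((d * m : ℕ) : ℤ) < |(i : ℤ) - (j : ℤ)| → (A ^ d) i j = 0 := by
  intro d
  induction d with
  | zero =>
    intro i j h
    have hij : i ≠ j := by
      rintro rfl
      simp at h
    simp [Matrix.one_apply_ne hij]
  | succ d ih =>
    intro i j h
    rw [pow_succ, Matrix.mul_apply]
    apply Finset.sum_eq_zero
    intro l _
    by_cases h1 : ((d * m : ℕ) : ℤ) < |(i : ℤ) - (l : ℤ)|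
    · rw [ih i l h1, zero_mul]
    · have h2 : (m : ℤ) < |(l : ℤ) - (j : ℤ)| := by
        push_neg at h1
        have htri : |(i : ℤ) - (j : ℤ)| ≤ |(i : ℤ) - (l : ℤ)| + |(l : ℤ) - (j : ℤ)| :=
          abs_sub_le _ _ _
        have : (((d + 1) * m : ℕ) : ℤ) = ((d * m : ℕ) : ℤ) + (m : ℤ) := by push_cast; ring
        omega
      rw [hband l j h2, mul_zero]

end Aux

/-- Let `A ∈ Mₙ(A₀)` be Hermitian with bandwidth `m ≥ 1` and spectrum in
`[-1,1]`, and let `f : ℝ → ℝ` be continuous on `[-1,1]`.  (The C*-algebra `Mₙ(A₀)` is realized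
via a *-isomorphism `φ` onto a C*-algebra `𝒜`, and `f(A)` is `φ.symm (cfc f (φ A))`, i.e. the
continuous functional calculus applied to `A`.)  Then for every `k ≥ 0`, every real polynomial
`p` of degree at most `k`, and all indices `i, j` with `|i - j| > k·m`,
`‖[f(A)]_{ij}‖ ≤ sup_{x ∈ [-1,1]} |f(x) - p(x)|`. -/
theorem norm_entry_cfc_le_best_approx_of_banded_selfAdjoint
    {A₀ : Type*} [CStarAlgebra A₀] {n : ℕ}
    {𝒜 : Type*} [CStarAlgebra 𝒜]
    (φ : Matrix (Fin n) (Fin n) A₀ ≃⋆ₐ[ℂ] 𝒜)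
    (A : Matrix (Fin n) (Fin n) A₀) (hA : IsSelfAdjoint A)
    (hspec : spectrum ℝ A ⊆ Set.Icc (-1) 1)
    (m : ℕ) (hm : 1 ≤ m)
    (hband : ∀ i j : Fin n, (m : ℤ) < |(i : ℤ) - (j : ℤ)| → A i j = 0)
    (f : ℝ → ℝ) (hf : ContinuousOn f (Set.Icc (-1) 1))
    (k : ℕ) (p : Polynomial ℝ) (hp : p.degree ≤ k)
    (i j : Fin n) (hij : ((k * m : ℕ) : ℤ) < |(i : ℤ) - (j : ℤ)|) :
    ‖(φ.symm (cfc f (φ A))) i j‖ ≤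
      sSup ((fun x => |f x - p.eval x|) '' Set.Icc (-1 : ℝ) 1) := by
  -- the `ℝ`-algebra equivalence underlying `φ`
  let e : Matrix (Fin n) (Fin n) A₀ ≃ₐ[ℝ] 𝒜 :=
    (AlgEquivClass.toAlgEquiv φ : Matrix (Fin n) (Fin n) A₀ ≃ₐ[ℂ] 𝒜).restrictScalars ℝ
  have he : ∀ x, e x = φ x := fun _ => rfl
  have ha' : IsSelfAdjoint (φ A) := hA.map φ
  have hspec' : spectrum ℝ (φ A) = spectrum ℝ A := by
    rw [show φ A = e A from rfl, AlgEquiv.spectrum_eq]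
  have hspec2 : spectrum ℝ (φ A) ⊆ Set.Icc (-1) 1 := hspec' ▸ hspec
  have hf' : ContinuousOn f (spectrum ℝ (φ A)) := hf.mono hspec2
  have hpcont : Continuous fun x : ℝ => p.eval x := p.continuous
  have hp' : ContinuousOn (fun x : ℝ => p.eval x) (spectrum ℝ (φ A)) := hpcont.continuousOn
  -- the sup is well behaved
  set S : Set ℝ := (fun x => |f x - p.eval x|) '' Set.Icc (-1 : ℝ) 1 with hS
  have hcont : ContinuousOn (fun x => |f x - p.eval x|) (Set.Icc (-1 : ℝ) 1) :=
    (hf.sub hpcont.continuousOn).abs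
  have hbdd : BddAbove S := (isCompact_Icc.image_of_continuousOn hcont).bddAbove
  have hc0 : 0 ≤ sSup S := by
    have hmem : |f 0 - p.eval 0| ∈ S := ⟨0, by norm_num, rfl⟩
    exact le_trans (abs_nonneg _) (le_csSup hbdd hmem)
  -- split `cfc f` into the error part and the polynomial part
  have hsub : cfc (fun x => f x - p.eval x) (φ A)
      = cfc f (φ A) - cfc (fun x => p.eval x) (φ A) :=
    cfc_sub f (fun x => p.eval x) (φ A) hf' hp'
  have hpoly : cfc (fun x => p.eval x) (φ A) = aeval (φ A) p := cfc_polynomial p (φ A) ha'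
  -- the polynomial part has zero `(i,j)` entry
  have hAeval : φ.symm (aeval (φ A) p) = aeval A p := by
    have : aeval (e A) p = e (aeval A p) :=
      aeval_algHom_apply (e : Matrix (Fin n) (Fin n) A₀ →ₐ[ℝ] 𝒜) A p
    rw [show φ A = e A from rfl, this]
    exact φ.symm_apply_apply _
  have hdeg : p.natDegree ≤ k := Polynomial.natDegree_le_iff_degree_le.mpr hp
  have hzero : (aeval A p) i j = 0 := by
    rw [Polynomial.aeval_eq_sum_range (x := A)]
    rw [Matrix.sum_apply]
    apply Finset.sum_eq_zero
    intro d hd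
    rw [Finset.mem_range, Nat.lt_succ_iff] at hd
    have hdm : ((d * m : ℕ) : ℤ) ≤ ((k * m : ℕ) : ℤ) := by
      have : d * m ≤ k * m := Nat.mul_le_mul_right m (hd.trans hdeg)
      exact_mod_cast this
    rw [Matrix.smul_apply, aux_pow_band A m hband d i j (lt_of_le_of_lt hdm hij), smul_zero]
  -- rewrite the entry
  have hentry : (φ.symm (cfc f (φ A))) i j
      = (φ.symm (cfc (fun x => f x - p.eval x) (φ A))) i j := by
    rw [hsub, hpoly, map_sub, Matrix.sub_apply, hAeval, hzero, sub_zero]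
  rw [hentry]
  -- bound the entry norm by the norm of the cfc element
  have hle1 : ‖(φ.symm (cfc (fun x => f x - p.eval x) (φ A))) i j‖
      ≤ ‖cfc (fun x => f x - p.eval x) (φ A)‖ := by
    have := aux_entry_norm_le φ (φ.symm (cfc (fun x => f x - p.eval x) (φ A))) i j
    rwa [φ.apply_symm_apply] at this
  refine hle1.trans ?_
  apply norm_cfc_le hc0
  intro x hx
  rw [Real.norm_eq_abs]
  exact le_csSup hbdd ⟨x, hspec2 hx, rfl⟩
end

section
/- Let A₀ be a unital C*-algebra and let A ∈ M_n(A₀) be selfadjoint (Hermitian) with bandwidth m ≥ 1 and with spectrum contained in [−1,1]. Let f : ℝ → ℝ be continuous on [−1,1] and suppose there exist constants c₀ > 0 and 0 < ξ < 1 such that for every integer k ≥ 0 there is a real polynomial p_k of degree at most k with sup_{x∈[−1,1]} |f(x) − p_k(x)| ≤ c₀ ξ^{k+1}. Then for all indices i, j, ‖[f(A)]_{ij}‖ ≤ C · ξ^{|i−j|/m}, where C = max{‖f(A)‖, c₀} and f(A) is defined by the continuous functional calculus; in particular the entries of f(A) decay exponentially away from the main diagonal at the rate ζ = ξ^{1/m}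 ∈ (0,1). -/
section aux

variable {A₀ : Type*} [CStarAlgebra A₀] {n : ℕ} {𝒜 : Type*} [CStarAlgebra 𝒜]

/-- The `ℂ`-algebra equivalence underlying `φ`. -/
noncomputable def bandAuxAlgEquivC (φ : Matrix (Fin n) (Fin n) A₀ ≃⋆ₐ[ℂ] 𝒜) :
    Matrix (Fin n) (Fin n) A₀ ≃ₐ[ℂ] 𝒜 :=
  { φ with
    commutes' := fun r => by
      rw [Algebra.algebraMap_eq_smul_one, Algebra.algebraMap_eq_smul_one]
      show φ (r • 1) = r • 1
      rw [map_smul, map_one] }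

lemma bandAuxAlgEquivC_apply (φ : Matrix (Fin n) (Fin n) A₀ ≃⋆ₐ[ℂ] 𝒜) (x) :
    bandAuxAlgEquivC φ x = φ x := rfl

/-- The `ℝ`-algebra equivalence underlying `φ`. -/
noncomputable def bandAuxAlgEquivR (φ : Matrix (Fin n) (Fin n) A₀ ≃⋆ₐ[ℂ] 𝒜) :
    Matrix (Fin n) (Fin n) A₀ ≃ₐ[ℝ] 𝒜 :=
  { (φ.restrictScalars ℝ : Matrix (Fin n) (Fin n) A₀ ≃⋆ₐ[ℝ] 𝒜) with
    commutes' := fun r => by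
      rw [Algebra.algebraMap_eq_smul_one, Algebra.algebraMap_eq_smul_one]
      show (φ.restrictScalars ℝ) (r • 1) = r • 1
      rw [map_smul, map_one] }

lemma bandAuxAlgEquivR_apply (φ : Matrix (Fin n) (Fin n) A₀ ≃⋆ₐ[ℂ] 𝒜) (x) :
    bandAuxAlgEquivR φ x = φ x := rfl

lemma bandAuxAlgEquivR_symm_apply (φ : Matrix (Fin n) (Fin n) A₀ ≃⋆ₐ[ℂ] 𝒜) (x) :
    (bandAuxAlgEquivR φ).symm x = φ.symm x := rfl

lemma bandAux_diagonal_isUnit {v : Fin n → A₀} (h : IsUnit (Matrix.diagonal v)) (j : Fin n) :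
    IsUnit (v j) := by
  obtain ⟨u, hu⟩ := h
  have h1 : Matrix.diagonal v * u.inv = 1 := by rw [← hu]; exact u.val_inv
  have h2 : u.inv * Matrix.diagonal v = 1 := by rw [← hu]; exact u.inv_val
  have e1 : (Matrix.diagonal v * u.inv) j j = (1 : Matrix (Fin n) (Fin n) A₀) j j := by rw [h1]
  have e2 : (u.inv * Matrix.diagonal v) j j = (1 : Matrix (Fin n) (Fin n) A₀) j j := by rw [h2]
  rw [Matrix.diagonal_mul, Matrix.one_apply_eq] at e1
  rw [Matrix.mul_diagonal, Matrix.one_apply_eq] at e2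
  exact ⟨⟨v j, u.inv j j, e1, e2⟩, rfl⟩

lemma bandAux_spectrum_subset (a : A₀) (j : Fin n) :
    spectrum ℂ a ⊆ spectrum ℂ (Matrix.single j j a) := by
  intro z hz
  by_contra hz'
  rw [spectrum.notMem_iff] at hz'
  rw [spectrum.mem_iff] at hz
  apply hz
  have key : algebraMap ℂ (Matrix (Fin n) (Fin n) A₀) z - Matrix.single j j a =
      Matrix.diagonal (fun l => if l = j then algebraMap ℂ A₀ z - a else algebraMap ℂ A₀ z) := by
    rw [Matrix.algebraMap_eq_diagonal]
    ext k l
    by_cases hkl : k = l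
    · subst hkl
      by_cases hkj : k = j
      · subst hkj; simp [Matrix.diagonal_apply, Matrix.single]
      · simp [Matrix.diagonal_apply, Matrix.single, hkj, Ne.symm hkj]
    · simp [Matrix.diagonal_apply, hkl, Matrix.single]
      intro h1 h2; exact absurd (h1.symm.trans h2) hkl
  rw [key] at hz'
  simpa using bandAux_diagonal_isUnit hz' j

/-- Key lemma: norms of entries are dominated by the C*-norm transported by `φ`. -/
lemma bandAux_entry_norm_le (φ : Matrix (Fin n) (Fin n) A₀ ≃⋆ₐ[ℂ] 𝒜)
    (N : Matrix (Fin n) (Fin n) A₀) (i j : Fin n) : ‖N i j‖ ≤ ‖φ N‖ := by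
  by_cases hnt : Nontrivial 𝒜
  case neg =>
    rw [not_nontrivial_iff_subsingleton] at hnt
    have : Subsingleton (Matrix (Fin n) (Fin n) A₀) := φ.toEquiv.subsingleton
    rw [Subsingleton.elim N 0]
    simpa using norm_nonneg (φ 0)
  set b := N i j with hb
  set S : Matrix (Fin n) (Fin n) A₀ := Matrix.single i j b with hSdef
  have hS : Matrix.single i i (1 : A₀) * N * Matrix.single j j (1 : A₀) = S := by
    ext k l
    simp [Matrix.mul_apply, Matrix.single, ite_and, Finset.sum_ite_eq,
      Finset.sum_ite_eq', hSdef]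
    split_ifs <;> rfl
  have hstar : star S * S = Matrix.single j j (star b * b) := by
    ext k l
    simp [Matrix.mul_apply, Matrix.single, Matrix.star_apply, ite_and,
      Finset.sum_ite_eq, Finset.sum_ite_eq', hSdef, apply_ite (star : A₀ → A₀)]
    split_ifs <;> rfl
  -- spectral radius chain
  have h1 : (‖star b * b‖₊ : ENNReal) ≤ (‖φ (Matrix.single j j (star b * b))‖₊ : ENNReal) := by
    calc (‖star b * b‖₊ : ENNReal) = spectralRadius ℂ (star b * b) :=
          ((IsSelfAdjoint.star_mul_self b).spectralRadius_eq_nnnorm).symm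
      _ ≤ spectralRadius ℂ (Matrix.single j j (star b * b)) := by
          refine iSup₂_le fun z hz => ?_
          exact le_iSup₂ (f := fun (z : ℂ) (_ : z ∈ spectrum ℂ (Matrix.single j j (star b * b))) => (‖z‖₊ : ENNReal)) z (bandAux_spectrum_subset (star b * b) j hz)
      _ = spectralRadius ℂ (φ (Matrix.single j j (star b * b))) := by
          unfold spectralRadius
          rw [← bandAuxAlgEquivC_apply φ, AlgEquiv.spectrum_eq]
      _ ≤ (‖φ (Matrix.single j j (star b * b))‖₊ : ENNReal) :=
          spectrum.spectralRadius_le_nnnorm _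
  have h2 : ‖star b * b‖ ≤ ‖φ (Matrix.single j j (star b * b))‖ := by
    exact_mod_cast h1
  -- projections have norm at most one
  have hP : ∀ k : Fin n, ‖φ (Matrix.single k k (1 : A₀))‖ ≤ 1 := by
    intro k
    set q := φ (Matrix.single k k (1 : A₀)) with hq
    have hq1 : star q * q = q := by
      rw [hq, ← map_star, ← map_mul]
      congr 1
      ext k' l'
      simp [Matrix.mul_apply, Matrix.single, Matrix.star_apply, ite_and,
        Finset.sum_ite_eq, Finset.sum_ite_eq', apply_ite (star : A₀ → A₀)]
      split_ifs <;> simp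
    have hq2 : ‖q‖ * ‖q‖ = ‖q‖ := by rw [← CStarRing.norm_star_mul_self, hq1]
    nlinarith [norm_nonneg q]
  have hnormS : ‖φ S‖ ≤ ‖φ N‖ := by
    rw [← hS, map_mul, map_mul]
    calc ‖φ (Matrix.single i i (1 : A₀)) * φ N * φ (Matrix.single j j (1 : A₀))‖
        ≤ ‖φ (Matrix.single i i (1 : A₀)) * φ N‖ *
            ‖φ (Matrix.single j j (1 : A₀))‖ := norm_mul_le _ _
      _ ≤ ‖φ (Matrix.single i i (1 : A₀)) * φ N‖ * 1 := by
          gcongr; exact hP j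
      _ = ‖φ (Matrix.single i i (1 : A₀)) * φ N‖ := mul_one _
      _ ≤ ‖φ (Matrix.single i i (1 : A₀))‖ * ‖φ N‖ := norm_mul_le _ _
      _ ≤ 1 * ‖φ N‖ := by gcongr; exact hP i
      _ = ‖φ N‖ := one_mul _
  have hfinal : ‖b‖ * ‖b‖ ≤ ‖φ N‖ * ‖φ N‖ := by
    calc ‖b‖ * ‖b‖ = ‖star b * b‖ := (CStarRing.norm_star_mul_self).symm
      _ ≤ ‖φ (Matrix.single j j (star b * b))‖ := h2
      _ = ‖star (φ S) * φ S‖ := by rw [← hstar, map_mul, map_star]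
      _ = ‖φ S‖ * ‖φ S‖ := CStarRing.norm_star_mul_self
      _ ≤ ‖φ N‖ * ‖φ N‖ := mul_le_mul hnormS hnormS (norm_nonneg _) (norm_nonneg _)
  nlinarith [norm_nonneg b, norm_nonneg (φ N)]

lemma bandAux_pow (A : Matrix (Fin n) (Fin n) A₀) (m : ℕ)
    (hband : ∀ i j : Fin n, (m : ℤ) < |(i : ℤ) - (j : ℤ)| → A i j = 0) (k : ℕ) :
    ∀ i j : Fin n, ((k * m : ℕ) : ℤ) < |(i : ℤ) - (j : ℤ)| → (A ^ k) i j = 0 := by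
  induction k with
  | zero =>
    intro i j h
    simp only [Nat.zero_mul, Nat.cast_zero] at h
    have hij : i ≠ j := by
      intro hij; subst hij; simp at h
    simp [pow_zero, Matrix.one_apply, hij]
  | succ k ih =>
    intro i j h
    rw [pow_succ, Matrix.mul_apply]
    refine Finset.sum_eq_zero fun l _ => ?_
    by_cases h1 : ((k * m : ℕ) : ℤ) < |(i : ℤ) - (l : ℤ)|
    · rw [ih i l h1, zero_mul]
    · push_neg at h1
      have htri : |(i : ℤ) - (j : ℤ)| ≤ |(i : ℤ) - (l : ℤ)| + |(l : ℤ) - (j : ℤ)| :=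
        abs_sub_le _ _ _
      have h2 : (m : ℤ) < |(l : ℤ) - (j : ℤ)| := by
        push_cast at h h1 ⊢
        nlinarith
      rw [hband l j h2, mul_zero]

lemma bandAux_aeval (A : Matrix (Fin n) (Fin n) A₀) (m : ℕ)
    (hband : ∀ i j : Fin n, (m : ℤ) < |(i : ℤ) - (j : ℤ)| → A i j = 0)
    (p : Polynomial ℝ) (k : ℕ) (hdeg : p.natDegree ≤ k) (i j : Fin n)
    (h : ((k * m : ℕ) : ℤ) < |(i : ℤ) - (j : ℤ)|) :
    (Polynomial.aeval A p) i j = 0 := by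
  rw [Polynomial.aeval_eq_sum_range]
  rw [Matrix.sum_apply]
  refine Finset.sum_eq_zero fun l hl => ?_
  rw [Finset.mem_range] at hl
  have hlk : l ≤ k := by omega
  have : ((l * m : ℕ) : ℤ) < |(i : ℤ) - (j : ℤ)| := by
    have : (l * m : ℕ) ≤ (k * m : ℕ) := Nat.mul_le_mul_right _ hlk
    push_cast at this ⊢
    push_cast at h
    linarith
  rw [Matrix.smul_apply, bandAux_pow A m hband l i j this, smul_zero]

end aux

/-- Let `A ∈ Mₙ(A₀)` be Hermitian with bandwidth `m ≥ 1` and spectrum in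
`[-1,1]`; let `f : ℝ → ℝ` be continuous on `[-1,1]` and suppose there are `c₀ > 0`,
`0 < ξ < 1` such that for each `k` some real polynomial of degree at most `k` approximates
`f` on `[-1,1]` within `c₀ ξ^{k+1}`.  Then, with `f(A) = φ.symm (cfc f (φ A))` (continuous
functional calculus, the C*-structure of `Mₙ(A₀)` being realized via the *-isomorphism `φ`),
`‖[f(A)]_{ij}‖ ≤ max{‖f(A)‖, c₀} · ξ^{|i-j|/m}` for all `i, j`. -/
theorem norm_entry_cfc_le_exp_decay_of_banded_selfAdjoint
    {A₀ : Type*} [CStarAlgebra A₀] {n : ℕ}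
    {𝒜 : Type*} [CStarAlgebra 𝒜]
    (φ : Matrix (Fin n) (Fin n) A₀ ≃⋆ₐ[ℂ] 𝒜)
    (A : Matrix (Fin n) (Fin n) A₀) (hA : IsSelfAdjoint A)
    (hspec : spectrum ℝ A ⊆ Set.Icc (-1) 1)
    (m : ℕ) (hm : 1 ≤ m)
    (hband : ∀ i j : Fin n, (m : ℤ) < |(i : ℤ) - (j : ℤ)| → A i j = 0)
    (f : ℝ → ℝ) (hf : ContinuousOn f (Set.Icc (-1) 1))
    (c₀ ξ : ℝ) (hc₀ : 0 < c₀) (hξ₀ : 0 < ξ) (hξ₁ : ξ < 1)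
    (happrox : ∀ k : ℕ, ∃ p : Polynomial ℝ, p.degree ≤ k ∧
      ∀ x ∈ Set.Icc (-1 : ℝ) 1, |f x - p.eval x| ≤ c₀ * ξ ^ (k + 1))
    (i j : Fin n) :
    ‖(φ.symm (cfc f (φ A))) i j‖ ≤
      max ‖cfc f (φ A)‖ c₀ * ξ ^ (|((i : ℕ) : ℝ) - ((j : ℕ) : ℝ)| / (m : ℝ)) := by
  have hm' : (0 : ℝ) < m := by exact_mod_cast hm
  set D : ℤ := |(i : ℤ) - (j : ℤ)| with hD
  have hD0 : 0 ≤ D := abs_nonneg _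
  have hexp : |((i : ℕ) : ℝ) - ((j : ℕ) : ℝ)| = ((D : ℤ) : ℝ) := by
    rw [hD]
    push_cast
    ring_nf
  rw [hexp]
  have hrpow_nonneg : (0 : ℝ) ≤ ξ ^ (((D : ℤ) : ℝ) / (m : ℝ)) :=
    Real.rpow_nonneg hξ₀.le _
  -- selfadjointness and spectrum of φ A
  have ha : IsSelfAdjoint (φ A) := by
    rw [IsSelfAdjoint, ← map_star, hA.star_eq]
  have hspec' : spectrum ℝ (φ A) ⊆ Set.Icc (-1) 1 := by
    rw [← bandAuxAlgEquivR_apply, AlgEquiv.spectrum_eq]; exact hspec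
  have hcf : ContinuousOn f (spectrum ℝ (φ A)) := hf.mono hspec'
  by_cases hDz : D = 0
  · -- diagonal-ish case
    rw [hDz]
    simp only [Int.cast_zero, zero_div, Real.rpow_zero, mul_one]
    calc ‖(φ.symm (cfc f (φ A))) i j‖ ≤ ‖φ (φ.symm (cfc f (φ A)))‖ :=
          bandAux_entry_norm_le φ _ i j
      _ = ‖cfc f (φ A)‖ := by rw [φ.apply_symm_apply]
      _ ≤ max ‖cfc f (φ A)‖ c₀ := le_max_left _ _
  · -- off-diagonal case
    have hD1 : 1 ≤ D := by omega
    set k : ℕ := (D.toNat - 1) / m with hk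
    have hdm := Nat.div_add_mod (D.toNat - 1) m
    have hmod := Nat.mod_lt (D.toNat - 1) (show 0 < m by omega)
    have hk1 : ((k * m : ℕ) : ℤ) < D := by
      have : k * m ≤ D.toNat - 1 := by
        rw [hk]; exact Nat.div_mul_le_self _ _
      omega
    have hk2 : ((D : ℤ) : ℝ) / (m : ℝ) ≤ ((k + 1 : ℕ) : ℝ) := by
      have h2 : D.toNat ≤ k * m + m := by
        have hthis : k * m + (D.toNat - 1) % m = D.toNat - 1 := by
          rw [hk, mul_comm]; exact hdm
        omega
      have hDle : ((D : ℤ) : ℝ) ≤ (k : ℝ) * (m : ℝ) + (m : ℝ) := by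
        have : (D : ℤ) ≤ ((k * m + m : ℕ) : ℤ) := by omega
        exact_mod_cast this
      rw [div_le_iff₀ hm']
      push_cast
      nlinarith [hDle]
    obtain ⟨p, hpdeg, hp⟩ := happrox k
    have hnd : p.natDegree ≤ k := Polynomial.natDegree_le_iff_degree_le.2 hpdeg
    have hcp : ContinuousOn (fun x => p.eval x) (spectrum ℝ (φ A)) :=
      p.continuous.continuousOn
    -- the polynomial part vanishes at entry (i,j)
    have hzero : (Polynomial.aeval A p) i j = 0 :=
      bandAux_aeval A m hband p k hnd i j (by rw [← hD]; exact hk1)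
    have hsymm : φ.symm (Polynomial.aeval (φ A) p) = Polynomial.aeval A p := by
      rw [← bandAuxAlgEquivR_symm_apply]
      have := Polynomial.aeval_algHom_apply ((bandAuxAlgEquivR φ).symm.toAlgHom) (φ A) p
      simp only [AlgEquiv.coe_toAlgHom] at this
      rw [← this, bandAuxAlgEquivR_symm_apply, φ.symm_apply_apply]
    have hcfcp : cfc (fun x => p.eval x) (φ A) = Polynomial.aeval (φ A) p :=
      cfc_polynomial p (φ A)
    have hnorm : ‖cfc f (φ A) - Polynomial.aeval (φ A) p‖ ≤ c₀ * ξ ^ (k + 1) := by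
      rw [← hcfcp, ← cfc_sub f (fun x => p.eval x) (φ A) hcf hcp]
      refine norm_cfc_le (by positivity) fun x hx => ?_
      rw [Real.norm_eq_abs]
      exact hp x (hspec' hx)
    have hξpow : c₀ * ξ ^ (k + 1) ≤ c₀ * ξ ^ (((D : ℤ) : ℝ) / (m : ℝ)) := by
      refine mul_le_mul_of_nonneg_left ?_ hc₀.le
      have : (ξ : ℝ) ^ (k + 1) = ξ ^ (((k + 1 : ℕ) : ℝ)) := by
        rw [Real.rpow_natCast]
      rw [this]
      exact Real.rpow_le_rpow_of_exponent_ge hξ₀ hξ₁.le hk2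
    calc ‖(φ.symm (cfc f (φ A))) i j‖
        = ‖(φ.symm (cfc f (φ A) - Polynomial.aeval (φ A) p)) i j‖ := by
          rw [map_sub, hsymm, Matrix.sub_apply, hzero, sub_zero]
      _ ≤ ‖φ (φ.symm (cfc f (φ A) - Polynomial.aeval (φ A) p))‖ :=
          bandAux_entry_norm_le φ _ i j
      _ = ‖cfc f (φ A) - Polynomial.aeval (φ A) p‖ := by rw [φ.apply_symm_apply]
      _ ≤ c₀ * ξ ^ (k + 1) := hnorm
      _ ≤ c₀ * ξ ^ (((D : ℤ) : ℝ) / (m : ℝ)) := hξpow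
      _ ≤ max ‖cfc f (φ A)‖ c₀ * ξ ^ (((D : ℤ) : ℝ) / (m : ℝ)) :=
          mul_le_mul_of_nonneg_right (le_max_right _ _) hrpow_nonneg
end

section
/- Let A₀ be a unital C*-algebra, let m ≥ 1, and let f : ℝ → ℝ be continuous on [−1,1]. Suppose there exist constants c₀ > 0 and 0 < ξ < 1 such that for every integer k ≥ 0 there is a real polynomial p_k of degree at most k with sup_{x∈[−1,1]} |f(x) − p_k(x)| ≤ c₀ ξ^{k+1}, and set M = sup_{x∈[−1,1]} |f(x)|. Then for every n ∈ ℕ and every selfadjoint matrix A ∈ M_n(A₀) with bandwidth at most m and spectrum contained in [−1,1], one has ‖[f(A)]_{ij}‖ ≤ max{M, c₀} · ξ^{|i−j|/m} for all indices i, j; that is, the exponential decay bound holds with constants independent of the dimension n. -/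
open Matrix Polynomial

section aux

variable {A₀ : Type*} [CStarAlgebra A₀] {𝒜 : Type*} [CStarAlgebra 𝒜] {n : ℕ}

lemma star_stdBasisMatrix' (i j : Fin n) (a : A₀) :
    star (Matrix.single i j a) = Matrix.single j i (star a) := by
  ext k l
  rw [Matrix.star_apply]
  simp only [Matrix.single, Matrix.of_apply]
  rw [apply_ite (star : A₀ → A₀), star_zero]
  split_ifs with h1 h2 h2 <;> first | rfl | (exfalso; tauto)

/-- Diagonal embedding of `A₀` into `𝒜` through `φ`. -/
noncomputable def diagEmbed (φ : Matrix (Fin n) (Fin n) A₀ ≃⋆ₐ[ℂ] 𝒜) (i : Fin n) :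
    A₀ →⋆ₙₐ[ℂ] 𝒜 where
  toFun a := φ (Matrix.single i i a)
  map_smul' r a := by
    show φ (Matrix.single i i (r • a)) = _
    simp only [MonoidHom.id_apply]
    rw [← Matrix.smul_single]; exact _root_.map_smul φ r _
  map_zero' := by
    show φ (Matrix.single i i (0 : A₀)) = 0
    rw [Matrix.single_zero, map_zero]
  map_add' a b := by
    show φ (Matrix.single i i (a + b)) = _
    rw [Matrix.single_add, map_add]
  map_mul' a b := by
    show φ (Matrix.single i i (a * b)) = _
    rw [← Matrix.single_mul_single_same (j := i), _root_.map_mul]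
  map_star' a := by
    show φ (Matrix.single i i (star a)) = _
    rw [← star_stdBasisMatrix']
    exact map_star φ _

end aux

section aux2

variable {A₀ : Type*} [CStarAlgebra A₀] {𝒜 : Type*} [CStarAlgebra 𝒜] {n : ℕ}

lemma norm_phi_std_le_one (φ : Matrix (Fin n) (Fin n) A₀ ≃⋆ₐ[ℂ] 𝒜) (i j : Fin n) :
    ‖φ (Matrix.single i j (1 : A₀))‖ ≤ 1 := by
  have hproj : ∀ l : Fin n, ‖φ (Matrix.single l l (1 : A₀))‖ ≤ 1 := by
    intro l
    have h1 : star (φ (Matrix.single l l (1 : A₀))) * φ (Matrix.single l l (1 : A₀))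
        = φ (Matrix.single l l (1 : A₀)) := by
      rw [← map_star φ, star_stdBasisMatrix', star_one, ← _root_.map_mul φ,
        Matrix.single_mul_single_same, one_mul]
    have h2 := CStarRing.norm_star_mul_self (x := φ (Matrix.single l l (1 : A₀)))
    rw [h1] at h2
    nlinarith [norm_nonneg (φ (Matrix.single l l (1 : A₀)))]
  have h1 : star (φ (Matrix.single i j (1 : A₀))) * φ (Matrix.single i j (1 : A₀))
      = φ (Matrix.single j j (1 : A₀)) := by
    rw [← map_star φ, star_stdBasisMatrix', star_one, ← _root_.map_mul φ,
      Matrix.single_mul_single_same, one_mul]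
  have h2 := CStarRing.norm_star_mul_self (x := φ (Matrix.single i j (1 : A₀)))
  rw [h1] at h2
  nlinarith [norm_nonneg (φ (Matrix.single i j (1 : A₀))), hproj j]

lemma norm_entry_le (φ : Matrix (Fin n) (Fin n) A₀ ≃⋆ₐ[ℂ] 𝒜)
    (X : Matrix (Fin n) (Fin n) A₀) (i j : Fin n) : ‖X i j‖ ≤ ‖φ X‖ := by
  have hinj : Function.Injective (diagEmbed φ i) := by
    intro a b h
    have h2 : φ (Matrix.single i i a) = φ (Matrix.single i i b) := h
    have h3 := congrArg (fun M => M i i) (φ.injective h2)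
    simpa using h3
  have hiso := NonUnitalStarAlgHom.norm_map (diagEmbed φ i) hinj (X i j)
  have key : Matrix.single i i (X i j)
      = Matrix.single i i (1 : A₀) * X * Matrix.single j i (1 : A₀) := by
    ext a b
    by_cases ha : a = i <;> by_cases hb : b = i <;>
      simp [ha, hb, Matrix.single_apply_of_ne, Ne.symm]
  have hval : (diagEmbed φ i) (X i j)
      = φ (Matrix.single i i (1 : A₀)) * φ X * φ (Matrix.single j i (1 : A₀)) := by
    show φ (Matrix.single i i (X i j)) = _
    rw [key, _root_.map_mul, _root_.map_mul]
  have hn1 := norm_phi_std_le_one φ i i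
  have hn2 := norm_phi_std_le_one φ j i
  calc ‖X i j‖ = ‖(diagEmbed φ i) (X i j)‖ := hiso.symm
    _ = ‖φ (Matrix.single i i (1 : A₀)) * φ X * φ (Matrix.single j i (1 : A₀))‖ := by
        rw [hval]
    _ ≤ ‖φ (Matrix.single i i (1 : A₀)) * φ X‖ * ‖φ (Matrix.single j i (1 : A₀))‖ :=
        norm_mul_le _ _
    _ ≤ (‖φ (Matrix.single i i (1 : A₀))‖ * ‖φ X‖) * ‖φ (Matrix.single j i (1 : A₀))‖ := by
        gcongr
        exact norm_mul_le _ _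
    _ ≤ (1 * ‖φ X‖) * 1 := by
        gcongr
    _ = ‖φ X‖ := by ring

end aux2

section band

variable {A₀ : Type*} [CStarAlgebra A₀] {n : ℕ}

lemma pow_banded {m : ℕ} {A : Matrix (Fin n) (Fin n) A₀}
    (hband : ∀ i j : Fin n, (m : ℤ) < |(i : ℤ) - (j : ℤ)| → A i j = 0) :
    ∀ (l : ℕ) (i j : Fin n), ((l * m : ℕ) : ℤ) < |(i : ℤ) - (j : ℤ)| → (A ^ l) i j = 0 := by
  intro l
  induction l with
  | zero =>
    intro i j h
    have hij : i ≠ j := by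
      rintro rfl
      simp at h
    rw [pow_zero, Matrix.one_apply_ne hij]
  | succ l ih =>
    intro i j h
    rw [pow_succ, Matrix.mul_apply]
    apply Finset.sum_eq_zero
    intro t _
    by_cases ht : ((l * m : ℕ) : ℤ) < |(i : ℤ) - (t : ℤ)|
    · rw [ih i t ht, zero_mul]
    · have htj : (m : ℤ) < |(t : ℤ) - (j : ℤ)| := by
        push_neg at ht
        have h3 : |(i : ℤ) - (j : ℤ)| ≤ |(i : ℤ) - (t : ℤ)| + |(t : ℤ) - (j : ℤ)| :=
          abs_sub_le _ _ _
        have hc : (((l + 1) * m : ℕ) : ℤ) = ((l * m : ℕ) : ℤ) + (m : ℤ) := by push_cast; ring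
        omega
      rw [hband t j htj, mul_zero]

lemma aeval_banded {m k : ℕ} {A : Matrix (Fin n) (Fin n) A₀}
    (hband : ∀ i j : Fin n, (m : ℤ) < |(i : ℤ) - (j : ℤ)| → A i j = 0)
    (p : Polynomial ℝ) (hdeg : p.natDegree ≤ k) (i j : Fin n)
    (h : ((k * m : ℕ) : ℤ) < |(i : ℤ) - (j : ℤ)|) : (Polynomial.aeval A p) i j = 0 := by
  rw [Polynomial.aeval_eq_sum_range, Matrix.sum_apply]
  apply Finset.sum_eq_zero
  intro l hl
  rw [Matrix.smul_apply, pow_banded hband l i j, smul_zero]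
  refine lt_of_le_of_lt ?_ h
  have hlk : l ≤ k := le_trans (Nat.lt_succ_iff.mp (Finset.mem_range.mp hl)) hdeg
  exact_mod_cast Nat.mul_le_mul_right m hlk

end band

/-- Fix a unital C*-algebra `A₀`, a bandwidth `m ≥ 1`, and `f : ℝ → ℝ`
continuous on `[-1,1]` admitting polynomial approximations of degree `k` with uniform error
at most `c₀ ξ^{k+1}` on `[-1,1]` (`c₀ > 0`, `0 < ξ < 1`); set `M = sup_{[-1,1]} |f|`.
Then for *every* dimension `n` and every selfadjoint `A ∈ Mₙ(A₀)` with bandwidth at most `m`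
and spectrum in `[-1,1]` (the C*-structure of `Mₙ(A₀)` realized by a *-isomorphism `φ` onto
a C*-algebra `𝒜`, and `f(A) = φ.symm (cfc f (φ A))`),
`‖[f(A)]_{ij}‖ ≤ max{M, c₀} · ξ^{|i-j|/m}`: the decay bound is independent of `n`. -/
theorem norm_entry_cfc_le_exp_decay_uniform_in_dimension
    {A₀ : Type*} [CStarAlgebra A₀] (m : ℕ) (hm : 1 ≤ m)
    (f : ℝ → ℝ) (hf : ContinuousOn f (Set.Icc (-1) 1))
    (c₀ ξ : ℝ) (hc₀ : 0 < c₀) (hξ₀ : 0 < ξ) (hξ₁ : ξ < 1)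
    (happrox : ∀ k : ℕ, ∃ p : Polynomial ℝ, p.degree ≤ k ∧
      ∀ x ∈ Set.Icc (-1 : ℝ) 1, |f x - p.eval x| ≤ c₀ * ξ ^ (k + 1))
    (M : ℝ) (hM : M = sSup ((fun x => |f x|) '' Set.Icc (-1 : ℝ) 1)) :
    ∀ (n : ℕ) (𝒜 : Type*) [CStarAlgebra 𝒜]
      (φ : Matrix (Fin n) (Fin n) A₀ ≃⋆ₐ[ℂ] 𝒜)
      (A : Matrix (Fin n) (Fin n) A₀), IsSelfAdjoint A →
      spectrum ℝ A ⊆ Set.Icc (-1) 1 →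
      (∀ i j : Fin n, (m : ℤ) < |(i : ℤ) - (j : ℤ)| → A i j = 0) →
      ∀ i j : Fin n,
        ‖(φ.symm (cfc f (φ A))) i j‖ ≤
          max M c₀ * ξ ^ (|((i : ℕ) : ℝ) - ((j : ℕ) : ℝ)| / (m : ℝ)) := by
  intro n 𝒜 _inst φ A hsa hspec hband i j
  let e : Matrix (Fin n) (Fin n) A₀ ≃ₐ[ℝ] 𝒜 :=
    AlgEquiv.restrictScalars ℝ (StarAlgEquiv.toAlgEquiv φ : Matrix (Fin n) (Fin n) A₀ ≃ₐ[ℂ] 𝒜)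
  have hx : IsSelfAdjoint (φ A) := hsa.map φ
  have hspecx : spectrum ℝ (φ A) ⊆ Set.Icc (-1) 1 := by
    have h0 : φ A = e A := rfl
    rw [h0, AlgEquiv.spectrum_eq]
    exact hspec
  have hMub : ∀ y ∈ Set.Icc (-1 : ℝ) 1, |f y| ≤ M := by
    intro y hy
    rw [hM]
    exact le_csSup (IsCompact.bddAbove_image isCompact_Icc hf.abs) ⟨y, hy, rfl⟩
  have hM0 : 0 ≤ M := le_trans (abs_nonneg _) (hMub 0 (by norm_num))
  have hfc : ContinuousOn f (spectrum ℝ (φ A)) := hf.mono hspecx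
  set D : ℤ := |(i : ℤ) - (j : ℤ)| with hDdef
  have hD0 : 0 ≤ D := abs_nonneg _
  have hcast : |((i : ℕ) : ℝ) - ((j : ℕ) : ℝ)| = (D : ℝ) := by
    have h1 : ((i : ℕ) : ℝ) - ((j : ℕ) : ℝ) = (((i : ℤ) - (j : ℤ) : ℤ) : ℝ) := by
      push_cast; ring
    rw [h1, ← Int.cast_abs, hDdef]
  rw [hcast]
  rcases eq_or_lt_of_le hD0 with hD | hD
  · rw [← hD]
    simp only [Int.cast_zero, zero_div, Real.rpow_zero, mul_one]
    have h1 := norm_entry_le φ (φ.symm (cfc f (φ A))) i j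
    rw [StarAlgEquiv.apply_symm_apply] at h1
    refine h1.trans (le_trans ?_ (le_max_left M c₀))
    exact norm_cfc_le hM0 fun y hy => by
      rw [Real.norm_eq_abs]; exact hMub y (hspecx hy)
  · have hD1 : 1 ≤ D := hD
    set d : ℕ := D.toNat with hddef
    have hd : (d : ℤ) = D := Int.toNat_of_nonneg hD0
    have hd1 : 1 ≤ d := by omega
    set k : ℕ := (d - 1) / m with hkdef
    obtain ⟨p, hpdeg, hperr⟩ := happrox k
    have hpk : p.natDegree ≤ k := Polynomial.natDegree_le_iff_degree_le.mpr hpdeg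
    have hm0 : 0 < m := hm
    have hkm : ((k * m : ℕ) : ℤ) < D := by
      have h1 : k * m ≤ d - 1 := Nat.div_mul_le_self _ _
      omega
    have hdkm : d ≤ (k + 1) * m := by
      have h1 : m * k + (d - 1) % m = d - 1 := by
        rw [hkdef]; exact Nat.div_add_mod (d - 1) m
      have h2 : (d - 1) % m < m := Nat.mod_lt _ hm0
      have h3 : (k + 1) * m = m * k + m := by ring
      omega
    have hzero : (Polynomial.aeval A p) i j = 0 := by
      refine aeval_banded hband p hpk i j ?_
      rw [← hDdef]
      exact hkm
    have hsymm : φ.symm (Polynomial.aeval (φ A) p) = Polynomial.aeval A p := by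
      have h1 : Polynomial.aeval (φ A) p = e (Polynomial.aeval A p) :=
        Polynomial.aeval_algHom_apply e.toAlgHom A p
      rw [h1]
      exact φ.symm_apply_apply _
    have key : (φ.symm (cfc f (φ A))) i j
        = (φ.symm (cfc f (φ A) - Polynomial.aeval (φ A) p)) i j := by
      rw [map_sub, Matrix.sub_apply, hsymm, hzero, sub_zero]
    rw [key]
    have hub : ‖cfc f (φ A) - Polynomial.aeval (φ A) p‖ ≤ c₀ * ξ ^ (k + 1) := by
      rw [← cfc_polynomial p (φ A) hx,
        ← cfc_sub f p.eval (φ A) hfc (p.continuous_aeval.continuousOn)]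
      exact norm_cfc_le (by positivity) fun y hy => by
        rw [Real.norm_eq_abs]; exact hperr y (hspecx hy)
    have hentry := norm_entry_le φ (φ.symm (cfc f (φ A) - Polynomial.aeval (φ A) p)) i j
    rw [StarAlgEquiv.apply_symm_apply] at hentry
    refine hentry.trans (hub.trans ?_)
    have hexp : (D : ℝ) / m ≤ ((k + 1 : ℕ) : ℝ) := by
      rw [div_le_iff₀ (by positivity)]
      calc (D : ℝ) = (d : ℝ) := by exact_mod_cast hd.symm
        _ ≤ (((k + 1) * m : ℕ) : ℝ) := by exact_mod_cast hdkm
        _ = ((k + 1 : ℕ) : ℝ) * m := by push_cast; ring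
    have hrpow : ξ ^ (k + 1) ≤ ξ ^ ((D : ℝ) / m) := by
      rw [← Real.rpow_natCast ξ (k + 1)]
      exact Real.rpow_le_rpow_of_exponent_ge hξ₀ hξ₁.le hexp
    have hξp : (0 : ℝ) < ξ ^ ((D : ℝ) / m) := Real.rpow_pos_of_pos hξ₀ _
    calc c₀ * ξ ^ (k + 1) ≤ c₀ * ξ ^ ((D : ℝ) / m) :=
          mul_le_mul_of_nonneg_left hrpow hc₀.le
      _ ≤ max M c₀ * ξ ^ ((D : ℝ) / m) :=
          mul_le_mul_of_nonneg_right (le_max_right M c₀) hξp.le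
end
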